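/- Fix d ≥ 2 and n ≥ 2. Let η be a trivial even configuration on the torus 𝕋_n^d and let γ be (the edge set of) a wrap-around. Then the even configuration η △ γ, obtained as the symmetric difference of the open edge sets of η and γ, is non-trivial. -/

import Mathlib

open MeasureTheory

noncomputable section

attribute [local instance] Classical.propDecidable

instance : MeasurableSpace (ZMod 2) := ⊤

/-- The source (mod-2 boundary) of a configuration on a set `E` of edges, at a vertex `v`. -/
def srcAt {V : Type*} {E : Set (Sym2 V)} (ω : E → ZMod 2) (v : V) : ZMod 2 :=
  (Set.ncard {e : E | ω e = 1 ∧ v ∈ (e : Sym2 V)} : ZMod 2)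

/-- A configuration is even (sourceless). -/
def IsEvenConf {V : Type*} {E : Set (Sym2 V)} (ω : E → ZMod 2) : Prop :=
  ∀ v : V, srcAt ω v = 0

/-- The set of open edges of a configuration. -/
def openEdges {V : Type*} {E : Set (Sym2 V)} (ω : E → ZMod 2) : Set (Sym2 V) :=
  {e : Sym2 V | ∃ h : e ∈ E, ω ⟨e, h⟩ = 1}

/-- The graph of open edges of a configuration. -/
def openGraph {V : Type*} {E : Set (Sym2 V)} (ω : E → ZMod 2) : SimpleGraph V :=
  SimpleGraph.fromEdgeSet (openEdges ω)

/-- The uniform probability measure on a (finite, nonempty) set `S`. -/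
def uniformOn {α : Type*} [MeasurableSpace α] (S : Set α) : Measure α :=
  (S.ncard : ENNReal)⁻¹ • Measure.sum (fun s : S => Measure.dirac (s : α))

/-- The torus `𝕋_n^d`, with vertex set `(ℤ/2nℤ)^d` and edges between `u` and `u ± eᵢ`. -/
def torusGraph (d n : ℕ) : SimpleGraph (Fin d → ZMod (2 * n)) :=
  SimpleGraph.fromRel (fun u v => ∃ i : Fin d, v = Function.update u i (u i + 1))

/-- An outgoing edge of the torus: an edge `{v, v + e₁}` whose first coordinate is `0`. -/
def IsOutgoing (d n : ℕ) (e : Sym2 (Fin d → ZMod (2 * n))) : Prop :=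
  ∃ (v : Fin d → ZMod (2 * n)) (i : Fin d), (i : ℕ) = 0 ∧ v i = 0 ∧
    e = s(v, Function.update v i (v i + 1))

/-- A wrap-around: the edge set of a cycle in the torus containing an odd number of
outgoing edges. -/
def IsWrapAround (d n : ℕ) (γ : Set (Sym2 (Fin d → ZMod (2 * n)))) : Prop :=
  ∃ (v : Fin d → ZMod (2 * n)) (c : (torusGraph d n).Walk v v),
    c.IsCycle ∧ γ = {e | e ∈ c.edges} ∧
    Odd (Set.ncard {e ∈ γ | IsOutgoing d n e})

/-- A configuration on (a subgraph of) the torus is non-trivial if its set of open edges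
contains a wrap-around. -/
def NonTrivialConf (d n : ℕ) {E : Set (Sym2 (Fin d → ZMod (2 * n)))}
    (ω : E → ZMod 2) : Prop :=
  ∃ γ, IsWrapAround d n γ ∧ γ ⊆ openEdges ω


section Helpers

variable {V : Type*} {E : Set (Sym2 V)}

lemma zmod2_add_eq_one (a b : ZMod 2) :
    a + b = 1 ↔ ((a = 1 ∧ ¬ b = 1) ∨ (b = 1 ∧ ¬ a = 1)) := by revert a b; decide

lemma cast_ncard_symmDiff {α : Type*} {A B : Set α} (hA : A.Finite) (hB : B.Finite) :
    (((symmDiff A B).ncard : ZMod 2)) = (A.ncard : ZMod 2) + (B.ncard : ZMod 2) := by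
  have hAB : (symmDiff A B).Finite := (hA.union hB).subset Set.symmDiff_subset_union
  have hI : (A ∩ B).Finite := hA.inter_of_left B
  have h1 : ((symmDiff A B) ∪ (A ∩ B)).ncard = (symmDiff A B).ncard + (A ∩ B).ncard :=
    Set.ncard_union_eq (disjoint_symmDiff_inf A B) hAB hI
  have he : (symmDiff A B) ∪ (A ∩ B) = A ∪ B := symmDiff_sup_inf A B
  have h2 := Set.ncard_union_add_ncard_inter A B hA hB
  rw [he] at h1
  have h1' := congrArg (Nat.cast : ℕ → ZMod 2) h1
  have h2' := congrArg (Nat.cast : ℕ → ZMod 2) h2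
  push_cast at h1' h2'
  have htwo : (2 : ZMod 2) = 0 := rfl
  linear_combination h2' - h1' - ((A ∩ B).ncard : ZMod 2) * htwo

lemma openEdges_add (ω χ : E → ZMod 2) :
    openEdges (fun e => ω e + χ e) = symmDiff (openEdges ω) (openEdges χ) := by
  ext e
  simp only [openEdges, Set.mem_setOf_eq, Set.mem_symmDiff]
  constructor
  · rintro ⟨h, hsum⟩
    rcases (zmod2_add_eq_one _ _).mp hsum with ⟨h1, h2⟩ | ⟨h1, h2⟩
    · exact Or.inl ⟨⟨h, h1⟩, by rintro ⟨h', hh'⟩; exact h2 hh'⟩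
    · exact Or.inr ⟨⟨h, h1⟩, by rintro ⟨h', hh'⟩; exact h2 hh'⟩
  · rintro (⟨⟨h, h1⟩, h2⟩ | ⟨⟨h, h1⟩, h2⟩)
    · exact ⟨h, (zmod2_add_eq_one _ _).mpr (Or.inl ⟨h1, fun hh => h2 ⟨h, hh⟩⟩)⟩
    · exact ⟨h, (zmod2_add_eq_one _ _).mpr (Or.inr ⟨h1, fun hh => h2 ⟨h, hh⟩⟩)⟩

lemma srcAt_add [Finite V] (ω χ : E → ZMod 2) (v : V) :
    srcAt (fun e => ω e + χ e) v = srcAt ω v + srcAt χ v := by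
  unfold srcAt
  have hset : {e : E | (ω e + χ e) = 1 ∧ v ∈ (e : Sym2 V)}
      = symmDiff {e : E | ω e = 1 ∧ v ∈ (e : Sym2 V)} {e : E | χ e = 1 ∧ v ∈ (e : Sym2 V)} := by
    ext e
    simp only [Set.mem_setOf_eq, Set.mem_symmDiff, zmod2_add_eq_one]
    tauto
  have : Finite (Sym2 V) := inferInstance
  rw [hset, cast_ncard_symmDiff (Set.toFinite _) (Set.toFinite _)]

lemma isEvenConf_add [Finite V] {ω χ : E → ZMod 2} (hω : IsEvenConf ω) (hχ : IsEvenConf χ) :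
    IsEvenConf (fun e => ω e + χ e) := by
  intro v
  rw [srcAt_add, hω v, hχ v, add_zero]

lemma srcAt_eq_ambient (ω : E → ZMod 2) (v : V) :
    srcAt ω v = (({e : Sym2 V | e ∈ openEdges ω ∧ v ∈ e}).ncard : ZMod 2) := by
  unfold srcAt
  congr 1
  rw [← Set.ncard_image_of_injective {e : E | ω e = 1 ∧ v ∈ (e : Sym2 V)} Subtype.val_injective]
  congr 1
  ext e
  simp only [Set.mem_image, Set.mem_setOf_eq, openEdges]
  constructor
  · rintro ⟨⟨e', he'⟩, ⟨h1, h2⟩, rfl⟩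
    exact ⟨⟨he', h1⟩, h2⟩
  · rintro ⟨⟨h, h1⟩, h2⟩
    exact ⟨⟨e, h⟩, ⟨h1, h2⟩, rfl⟩

lemma ite_one_zero_eq_one {p : Prop} [h : Decidable p] :
    (if p then (1 : ZMod 2) else 0) = 1 ↔ p := by
  split_ifs with hp <;> simp [hp]

lemma openEdges_indicator {S : Set (Sym2 V)} {χ : E → ZMod 2}
    (hχ : ∀ e : E, (χ e = 1 ↔ (e : Sym2 V) ∈ S)) :
    openEdges χ = S ∩ E := by
  ext e
  simp only [openEdges, Set.mem_setOf_eq, Set.mem_inter_iff]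
  constructor
  · rintro ⟨h, h1⟩
    exact ⟨(hχ ⟨e, h⟩).mp h1, h⟩
  · rintro ⟨hS, h⟩
    exact ⟨h, (hχ ⟨e, h⟩).mpr hS⟩

lemma isEvenConf_cycle_indicator [Finite V] {G : SimpleGraph V} {u : V} {c : G.Walk u u}
    (hc : c.IsCycle) (hsub : ∀ e ∈ c.edges, e ∈ E) {χ : E → ZMod 2}
    (hχ : ∀ e : E, (χ e = 1 ↔ (e : Sym2 V) ∈ {e' : Sym2 V | e' ∈ c.edges})) :
    IsEvenConf χ := by
  classical
  intro v
  rw [srcAt_eq_ambient, openEdges_indicator hχ]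
  have hcount : Even (c.edges.countP fun e => v ∈ e) :=
    (hc.isCircuit.isTrail.even_countP_edges_iff v).mpr (fun h => absurd rfl h)
  have hset : {e : Sym2 V | e ∈ {e' : Sym2 V | e' ∈ c.edges} ∩ E ∧ v ∈ e}
      = ↑((c.edges.filter (fun e => v ∈ e)).toFinset) := by
    ext e
    simp only [Set.mem_setOf_eq, Set.mem_inter_iff, List.coe_toFinset, List.mem_filter,
      decide_eq_true_eq]
    constructor
    · rintro ⟨⟨h1, _⟩, h2⟩; exact ⟨h1, h2⟩
    · rintro ⟨h1, h2⟩; exact ⟨⟨h1, hsub e h1⟩, h2⟩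
  rw [hset, Set.ncard_coe_finset,
    List.toFinset_card_of_nodup (hc.isCircuit.isTrail.edges_nodup.filter _),
    ← List.countP_eq_length_filter]
  exact (ZMod.natCast_eq_zero_iff_even).mpr hcount

end Helpers


section Graph
open SimpleGraph

lemma reachable_delete_of_even_degree {V : Type*} [Fintype V] [DecidableEq V]
    (G : SimpleGraph V) [DecidableRel G.Adj] (hdeg : ∀ w, Even (G.degree w))
    {u v : V} (huv : G.Adj u v) :
    (G \ SimpleGraph.fromEdgeSet {s(u, v)}).Reachable u v := by
  classical
  by_contra hreach
  set G' := G \ SimpleGraph.fromEdgeSet {s(u, v)} with hG'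
  have hG'adj : ∀ a b, G'.Adj a b ↔ G.Adj a b ∧ ¬(s(a, b) = s(u, v)) := by
    intro a b
    rw [hG', sdiff_adj, fromEdgeSet_adj]
    constructor
    · rintro ⟨h1, h2⟩
      exact ⟨h1, fun he => h2 ⟨he, h1.ne⟩⟩
    · rintro ⟨h1, h2⟩
      exact ⟨h1, fun he => h2 he.1⟩
  set C : Finset V := Finset.univ.filter (fun w => G'.Reachable u w) with hC
  have huC : u ∈ C := by simp only [hC, Finset.mem_filter, Finset.mem_univ, true_and]; exact Reachable.refl u
  have hvC : v ∉ C := by simpa [hC] using hreach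
  have hclosed : ∀ a b, G'.Adj a b → a ∈ C → b ∈ C := by
    intro a b hab ha
    simp only [hC, Finset.mem_filter, Finset.mem_univ, true_and] at ha ⊢
    exact ha.trans hab.reachable
  set D : Finset G'.Dart := Finset.univ.filter (fun d => d.toProd.1 ∈ C) with hD
  have hcard : D.card = ∑ w ∈ C, G'.degree w := by
    rw [Finset.card_eq_sum_card_fiberwise
      (f := fun d : G'.Dart => d.toProd.1) (t := C)
      (fun d hd => by simpa [hD] using hd)]
    refine Finset.sum_congr rfl fun w hw => ?_
    rw [← SimpleGraph.dart_fst_fiber_card_eq_degree G' w]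
    congr 1
    ext d
    simp only [hD, Finset.mem_filter, Finset.mem_univ, true_and]
    constructor
    · rintro ⟨_, h⟩; exact h
    · rintro h; exact ⟨h ▸ hw, h⟩
  have heven : Even D.card := by
    rw [← ZMod.natCast_eq_zero_iff_even]
    have h1 : ((D.card : ZMod 2)) = ∑ _d ∈ D, (1 : ZMod 2) := by simp
    rw [h1]
    refine Finset.sum_involution (fun d _ => d.symm) (fun d _ => by decide)
      (fun d _ h => d.symm_ne) (fun d hd => ?_) (fun d hd => d.symm_symm)
    simp only [hD, Finset.mem_filter, Finset.mem_univ, true_and] at hd ⊢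
    exact hclosed _ _ d.adj hd
  have hdegwC : ∀ w ∈ C.erase u, G'.degree w = G.degree w := by
    intro w hw
    obtain ⟨hwne, hwC⟩ := Finset.mem_erase.mp hw
    have hwv : w ≠ v := by rintro rfl; exact hvC hwC
    have hnb : G'.neighborFinset w = G.neighborFinset w := by
      ext x
      simp only [mem_neighborFinset, hG'adj]
      refine ⟨fun h => h.1, fun h => ⟨h, fun he => ?_⟩⟩
      rcases Sym2.eq_iff.mp he with ⟨rfl, rfl⟩ | ⟨rfl, rfl⟩
      · exact hwne rfl
      · exact hwv rfl
    rw [← card_neighborFinset_eq_degree, ← card_neighborFinset_eq_degree, hnb]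
  have hdegu : G'.degree u + 1 = G.degree u := by
    have hnb : G.neighborFinset u = insert v (G'.neighborFinset u) := by
      ext x
      simp only [mem_neighborFinset, Finset.mem_insert, hG'adj]
      constructor
      · intro h
        by_cases hx : x = v
        · exact Or.inl hx
        · refine Or.inr ⟨h, fun he => hx ?_⟩
          rcases Sym2.eq_iff.mp he with ⟨-, rfl⟩ | ⟨rfl, rfl⟩
          · rfl
          · rfl
      · rintro (rfl | ⟨h, -⟩)
        · exact huv
        · exact h
    have hvnb : v ∉ G'.neighborFinset u := by
      rw [mem_neighborFinset, hG'adj]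
      rintro ⟨-, h⟩
      exact h rfl
    rw [← card_neighborFinset_eq_degree, ← card_neighborFinset_eq_degree, hnb,
      Finset.card_insert_of_notMem hvnb]
  have hsplit : ∑ w ∈ C, G'.degree w = G'.degree u + ∑ w ∈ C.erase u, G'.degree w :=
    (Finset.add_sum_erase C _ huC).symm
  have hevenrest : Even (∑ w ∈ C.erase u, G'.degree w) := by
    refine Finset.sum_induction _ Even (fun a b ha hb => ha.add hb) Even.zero ?_
    intro w hw
    rw [hdegwC w hw]
    exact hdeg w
  have hevenu : Even (G'.degree u) := by
    have := hcard ▸ heven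
    rw [hsplit] at this
    rcases Nat.even_add.mp this with h
    exact h.mpr hevenrest
  have : Even (G.degree u) := hdeg u
  rw [← hdegu, Nat.even_add_one] at this
  exact this hevenu

lemma exists_cycle_of_even_degree {V : Type*} [Fintype V] [DecidableEq V]
    (G : SimpleGraph V) [DecidableRel G.Adj] (hdeg : ∀ w, Even (G.degree w))
    {u v : V} (huv : G.Adj u v) :
    ∃ (w : V) (p : G.Walk w w), p.IsCycle := by
  obtain ⟨w, p, hp, -⟩ := (SimpleGraph.adj_and_reachable_delete_edges_iff_exists_cycle).mp
    ⟨huv, reachable_delete_of_even_degree G hdeg huv⟩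
  exact ⟨w, p, hp⟩

lemma openGraph_edgeSet {V : Type*} {E : Set (Sym2 V)} (ω : E → ZMod 2)
    (hno : ∀ e ∈ openEdges ω, ¬ e.IsDiag) :
    (openGraph ω).edgeSet = openEdges ω := by
  rw [openGraph, SimpleGraph.edgeSet_fromEdgeSet]
  ext e
  simp only [Set.mem_diff, Set.mem_setOf_eq, and_iff_left_iff_imp]
  exact hno e

lemma even_degree_openGraph {V : Type*} [Fintype V] [DecidableEq V] {E : Set (Sym2 V)}
    {ω : E → ZMod 2} (hno : ∀ e ∈ openEdges ω, ¬ e.IsDiag) (heven : IsEvenConf ω)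
    [DecidableRel (openGraph ω).Adj] (v : V) : Even ((openGraph ω).degree v) := by
  classical
  have hsrc := heven v
  rw [srcAt_eq_ambient] at hsrc
  rw [← SimpleGraph.card_incidenceFinset_eq_degree]
  have hinc : (openGraph ω).incidenceSet v = {e : Sym2 V | e ∈ openEdges ω ∧ v ∈ e} := by
    rw [SimpleGraph.incidenceSet, openGraph_edgeSet ω hno]
  rw [← ZMod.natCast_eq_zero_iff_even, SimpleGraph.incidenceFinset, ← Set.ncard_eq_toFinset_card',
    hinc]
  exact hsrc

end Graph


lemma sep_symmDiff {α : Type*} (A B : Set α) (P : α → Prop) :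
    {e | e ∈ symmDiff A B ∧ P e} = symmDiff {e | e ∈ A ∧ P e} {e | e ∈ B ∧ P e} := by
  ext e
  simp only [Set.mem_setOf_eq, Set.mem_symmDiff]
  tauto

theorem nontrivial_of_odd_outgoing (d n : ℕ) (hn : n ≠ 0)
    (ω : (torusGraph d n).edgeSet → ZMod 2) (heven : IsEvenConf ω)
    (hodd : Odd ({e | e ∈ openEdges ω ∧ IsOutgoing d n e}.ncard)) :
    NonTrivialConf d n ω := by
  haveI : NeZero (2 * n) := ⟨by omega⟩
  classical
  suffices H : ∀ (N : ℕ) (ω : (torusGraph d n).edgeSet → ZMod 2), IsEvenConf ω →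
      Odd ({e | e ∈ openEdges ω ∧ IsOutgoing d n e}.ncard) →
      (openEdges ω).ncard ≤ N → NonTrivialConf d n ω by
    exact H _ ω heven hodd le_rfl
  clear heven hodd ω
  intro N
  induction N with
  | zero =>
    intro ω heven hodd hle
    exfalso
    have hsub : {e | e ∈ openEdges ω ∧ IsOutgoing d n e} ⊆ openEdges ω := fun e he => he.1
    have h1 : {e | e ∈ openEdges ω ∧ IsOutgoing d n e}.ncard ≠ 0 := by
      intro h
      rw [h] at hodd
      simp [Nat.odd_iff] at hodd
    have h2 := Set.ncard_le_ncard hsub (Set.toFinite _)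
    omega
  | succ N IH =>
    intro ω heven hodd hle
    have hsubE : openEdges ω ⊆ (torusGraph d n).edgeSet := by
      intro e he
      obtain ⟨h, -⟩ := he
      exact h
    have hno : ∀ e ∈ openEdges ω, ¬ e.IsDiag := fun e he =>
      SimpleGraph.not_isDiag_of_mem_edgeSet _ (hsubE he)
    have hab : ∃ a b, s(a, b) ∈ openEdges ω := by
      refine Sym2.exists.mp ?_
      obtain ⟨e₀, he₀, -⟩ := Set.nonempty_of_ncard_ne_zero
        (s := {e | e ∈ openEdges ω ∧ IsOutgoing d n e}) (by
          intro h
          rw [h] at hodd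
          simp [Nat.odd_iff] at hodd)
      exact ⟨e₀, he₀⟩
    obtain ⟨a, b, habo⟩ := hab
    have habne : a ≠ b := by
      intro h
      exact hno _ habo (by rw [h]; exact Sym2.mk_isDiag_iff.mpr rfl)
    have hadj : (openGraph ω).Adj a b := (SimpleGraph.fromEdgeSet_adj _).mpr ⟨habo, habne⟩
    obtain ⟨w, p, hp⟩ := exists_cycle_of_even_degree (openGraph ω)
      (even_degree_openGraph hno heven) hadj
    have hGle : openGraph ω ≤ torusGraph d n := by
      have h1 := SimpleGraph.fromEdgeSet_mono hsubE
      rwa [SimpleGraph.fromEdgeSet_edgeSet] at h1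
    set c' := p.mapLe hGle with hc'def
    have hc' : c'.IsCycle := hp.mapLe hGle
    have hedges : c'.edges = p.edges := by
      have hfun : ∀ e : Sym2 (Fin d → ZMod (2 * n)),
          Sym2.map (⇑(SimpleGraph.Hom.ofLE hGle)) e = e := by
        intro e
        induction e using Sym2.ind with
        | _ x y => simp [SimpleGraph.Hom.ofLE_apply]
      simp only [hc'def, SimpleGraph.Walk.mapLe, SimpleGraph.Walk.edges_map]
      exact List.map_id'' hfun p.edges
    have hpe : ∀ e ∈ p.edges, e ∈ openEdges ω := fun e he =>
      (openGraph_edgeSet ω hno) ▸ p.edges_subset_edgeSet he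
    set cset : Set (Sym2 (Fin d → ZMod (2 * n))) := {e' | e' ∈ c'.edges} with hcset
    have hcsub : cset ⊆ openEdges ω := fun e he => hpe e (by rwa [← hedges])
    by_cases hparity : Odd ({e | e ∈ cset ∧ IsOutgoing d n e}.ncard)
    · exact ⟨cset, ⟨w, c', hc', hcset, hparity⟩, hcsub⟩
    · set χ : (torusGraph d n).edgeSet → ZMod 2 :=
        fun e => if (e : Sym2 (Fin d → ZMod (2 * n))) ∈ cset then 1 else 0 with hχdef
      have hχspec : ∀ e, (χ e = 1 ↔ (e : Sym2 (Fin d → ZMod (2 * n))) ∈ cset) := by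
        rw [hχdef]
        intro e
        exact ite_one_zero_eq_one
      set ω' : (torusGraph d n).edgeSet → ZMod 2 := fun e => ω e + χ e with hω'def
      have hχopen : openEdges χ = cset := by
        rw [openEdges_indicator hχspec, Set.inter_eq_left.mpr (hcsub.trans hsubE)]
      have hω'open : openEdges ω' = openEdges ω \ cset := by
        rw [hω'def, openEdges_add, hχopen, symmDiff_of_ge hcsub]
      have hχeven : IsEvenConf χ :=
        isEvenConf_cycle_indicator hc' (fun e he => hsubE (hcsub he)) (fun e => hχspec e)
      have hω'even : IsEvenConf ω' := isEvenConf_add heven hχeven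
      have hω'odd : Odd ({e | e ∈ openEdges ω' ∧ IsOutgoing d n e}.ncard) := by
        have h1 : {e | e ∈ openEdges ω' ∧ IsOutgoing d n e}
            = symmDiff {e | e ∈ openEdges ω ∧ IsOutgoing d n e}
                {e | e ∈ cset ∧ IsOutgoing d n e} := by
          rw [hω'def, openEdges_add, hχopen]
          exact sep_symmDiff _ _ _
        rw [← ZMod.natCast_eq_one_iff_odd, h1,
          cast_ncard_symmDiff (Set.toFinite _) (Set.toFinite _),
          ZMod.natCast_eq_one_iff_odd.mpr hodd,
          ZMod.natCast_eq_zero_iff_even.mpr (Nat.not_odd_iff_even.mp hparity), add_zero]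
      have hcne : ∃ e₁, e₁ ∈ cset := by
        have h3 := hp.three_le_length
        have h4 : p.edges ≠ [] := by
          intro h
          have := SimpleGraph.Walk.length_edges p
          rw [h] at this
          simp at this
          omega
        obtain ⟨e₁, he₁⟩ := List.exists_mem_of_ne_nil _ h4
        exact ⟨e₁, by rw [hcset]; simp only [Set.mem_setOf_eq, hedges]; exact he₁⟩
      have hlt : (openEdges ω').ncard < (openEdges ω).ncard := by
        rw [hω'open]
        refine Set.ncard_lt_ncard ?_ (Set.toFinite _)
        rw [Set.ssubset_iff_subset_ne]
        refine ⟨Set.diff_subset, fun h => ?_⟩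
        obtain ⟨e₁, he₁⟩ := hcne
        have h5 : e₁ ∈ openEdges ω := hcsub he₁
        rw [← h] at h5
        exact h5.2 he₁
      obtain ⟨γ', hγ', hγ'sub⟩ := IH ω' hω'even hω'odd (by omega)
      refine ⟨γ', hγ', fun e he => ?_⟩
      have := hγ'sub he
      rw [hω'open] at this
      exact this.1

/-- The symmetric difference of a trivial even configuration on the torus
with a wrap-around is an even, non-trivial configuration. -/
theorem symmDiff_wrapAround_nontrivial (d n : ℕ) (hd : 2 ≤ d) (hn : 2 ≤ n)
    (η : (torusGraph d n).edgeSet → ZMod 2) (hηeven : IsEvenConf η)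
    (hηtriv : ¬ NonTrivialConf d n η)
    (γ : Set (Sym2 (Fin d → ZMod (2 * n)))) (hγ : IsWrapAround d n γ) :
    IsEvenConf (fun e : (torusGraph d n).edgeSet =>
        η e + if (e : Sym2 (Fin d → ZMod (2 * n))) ∈ γ then 1 else 0) ∧
    NonTrivialConf d n (fun e : (torusGraph d n).edgeSet =>
        η e + if (e : Sym2 (Fin d → ZMod (2 * n))) ∈ γ then 1 else 0) := by
  haveI : NeZero (2 * n) := ⟨by omega⟩
  obtain ⟨v, c, hc, hγeq, hγodd⟩ := hγ
  have hγsubE : γ ⊆ (torusGraph d n).edgeSet := by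
    rw [hγeq]
    exact fun e he => c.edges_subset_edgeSet he
  have hχspec : ∀ e : (torusGraph d n).edgeSet,
      ((if (e : Sym2 (Fin d → ZMod (2 * n))) ∈ γ then (1 : ZMod 2) else 0) = 1 ↔
        (e : Sym2 (Fin d → ZMod (2 * n))) ∈ γ) := fun e => ite_one_zero_eq_one
  have hχspec' : ∀ e : (torusGraph d n).edgeSet,
      ((if (e : Sym2 (Fin d → ZMod (2 * n))) ∈ γ then (1 : ZMod 2) else 0) = 1 ↔
        (e : Sym2 (Fin d → ZMod (2 * n))) ∈ {e' : Sym2 (Fin d → ZMod (2 * n)) | e' ∈ c.edges}) := by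
    rw [← hγeq]
    exact hχspec
  have hχeven : IsEvenConf (fun e : (torusGraph d n).edgeSet =>
      if (e : Sym2 (Fin d → ZMod (2 * n))) ∈ γ then (1 : ZMod 2) else 0) :=
    isEvenConf_cycle_indicator hc (fun e he => hγsubE (hγeq ▸ he)) hχspec'
  have heven : IsEvenConf (fun e : (torusGraph d n).edgeSet =>
      η e + if (e : Sym2 (Fin d → ZMod (2 * n))) ∈ γ then 1 else 0) :=
    isEvenConf_add hηeven hχeven
  refine ⟨heven, ?_⟩
  have hopenχ : openEdges (fun e : (torusGraph d n).edgeSet =>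
      if (e : Sym2 (Fin d → ZMod (2 * n))) ∈ γ then (1 : ZMod 2) else 0) = γ := by
    rw [openEdges_indicator hχspec, Set.inter_eq_left.mpr hγsubE]
  have hηout : Even ({e | e ∈ openEdges η ∧ IsOutgoing d n e}.ncard) := by
    by_contra h
    exact hηtriv (nontrivial_of_odd_outgoing d n (by omega) η hηeven (Nat.not_even_iff_odd.mp h))
  refine nontrivial_of_odd_outgoing d n (by omega) _ heven ?_
  have hseteq : {e | e ∈ openEdges (fun e : (torusGraph d n).edgeSet =>
        η e + if (e : Sym2 (Fin d → ZMod (2 * n))) ∈ γ then 1 else 0) ∧ IsOutgoing d n e}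
      = symmDiff {e | e ∈ openEdges η ∧ IsOutgoing d n e} {e | e ∈ γ ∧ IsOutgoing d n e} := by
    rw [openEdges_add, hopenχ]
    exact sep_symmDiff _ _ _
  rw [← ZMod.natCast_eq_one_iff_odd, hseteq, cast_ncard_symmDiff (Set.toFinite _) (Set.toFinite _),
    ZMod.natCast_eq_zero_iff_even.mpr hηout, ZMod.natCast_eq_one_iff_odd.mpr hγodd, zero_add]
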